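/- Let $p_0 \in [0,1]$ and define $g(r) = p_0/(r+1)$ for $r \ge 0$, with the convention $g(-1)=1$. Then $\sum_{r=0}^{\infty} \left[\prod_{i=0}^{r-1} g(i)\right](1-g(r))(r+1) = e^{p_0}$. -/

import Mathlib

theorem stmt_0 (p0 : ℝ) (hp0 : p0 ∈ Set.Icc (0:ℝ) 1)
    (g : ℤ → ℝ) (hg : ∀ r : ℤ, 0 ≤ r → g r = p0 / (r + 1)) (hgm : g (-1) = 1) :
    ∑' r : ℕ, (∏ i ∈ Finset.range r, g i) * (1 - g r) * ((r : ℝ) + 1) = Real.exp p0 := by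
  have hprod : ∀ r : ℕ, (∏ i ∈ Finset.range r, g (i : ℤ)) = p0 ^ r / r.factorial := by
    intro r
    induction r with
    | zero => simp
    | succ n ih =>
      rw [Finset.prod_range_succ, ih, hg n (by positivity), Nat.factorial_succ]
      have h1 : ((n : ℤ) : ℝ) + 1 = (n : ℝ) + 1 := by push_cast; ring
      have h2 : (0:ℝ) < (n : ℝ) + 1 := by positivity
      have h3 : (0:ℝ) < (n.factorial : ℝ) := by positivity
      rw [h1]
      push_cast
      field_simp
      ring
  have hA : HasSum (fun r : ℕ => p0 ^ r / r.factorial) (Real.exp p0) := by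
    rw [Real.exp_eq_exp_ℝ]
    exact NormedSpace.expSeries_div_hasSum_exp p0
  have hB : HasSum (fun r : ℕ => p0 ^ (r + 1) / r.factorial) (p0 * Real.exp p0) := by
    have := hA.mul_left p0
    convert this using 2 with r
    · rfl
    rw [pow_succ]
    ring
  have hC : HasSum (fun r : ℕ => (r : ℝ) * p0 ^ r / r.factorial) (p0 * Real.exp p0) := by
    have key : HasSum (fun n : ℕ =>
        ((n + 1 : ℕ) : ℝ) * p0 ^ (n + 1) / (n + 1).factorial) (p0 * Real.exp p0) := by
      convert hB using 2 with n
      rw [Nat.factorial_succ]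
      have h3 : (0:ℝ) < (n.factorial : ℝ) := by positivity
      push_cast
      field_simp
    have := (hasSum_nat_add_iff (f := fun r : ℕ => (r : ℝ) * p0 ^ r / r.factorial) 1).mp key
    simpa using this
  have hfinal : HasSum (fun r : ℕ => (∏ i ∈ Finset.range r, g i) * (1 - g r) * ((r : ℝ) + 1))
      (Real.exp p0) := by
    have h := (hA.add hC).sub hB
    have hval : Real.exp p0 + p0 * Real.exp p0 - p0 * Real.exp p0 = Real.exp p0 := by ring
    rw [hval] at h
    convert h using 1
    · rfl
    funext r
    rw [hprod r, hg r (by positivity)]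
    have h1 : ((r : ℤ) : ℝ) + 1 = (r : ℝ) + 1 := by push_cast; ring
    have h2 : (0:ℝ) < (r : ℝ) + 1 := by positivity
    have h3 : (0:ℝ) < (r.factorial : ℝ) := by positivity
    rw [h1, pow_succ]
    field_simp
    ring
  exact hfinal.tsum_eq
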